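/- arXiv:hep-th/0403283 — 4 statements merged into one kernel-verified Lean document; each statement's English description precedes it below -/
import Mathlib

section
/- Let R be a unital ring (e.g. a ring of square complex matrices), let m ∈ R, and for each k ≥ 0 set P_k = (1+m)^k + (1−m)^k and Q_k = (1+m)^k − (1−m)^k. Assume that P_k is a unit of R for every k ≥ 1 (in particular 2 = P_1 is a unit). Define the star-power sequence by m⁽¹⁾ = m and the MSFT recursion m⁽ⁿ⁺¹⁾ = (m + m⁽ⁿ⁾m)(1 + m⁽ⁿ⁾m)⁻¹ + (m⁽ⁿ⁾ − m m⁽ⁿ⁾)(1 + m m⁽ⁿ⁾)⁻¹. Then for every n ≥ 1: m⁽ⁿ⁾ commutes with m, the element 1 + m m⁽ⁿ⁾ is a unit, and m⁽ⁿ⁾ has the closed form m⁽ⁿ⁾ = Q_n · P_n⁻¹ = ((1+m)^n − (1−m)^n)((1+m)^n + (1−m)^n)⁻¹. -/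
/-- In a unital ring, the MSFT wedge-state recursion
`m⁽ⁿ⁺¹⁾ = (m + m⁽ⁿ⁾m)(1 + m⁽ⁿ⁾m)⁻¹ + (m⁽ⁿ⁾ − m m⁽ⁿ⁾)(1 + m m⁽ⁿ⁾)⁻¹` with `m⁽¹⁾ = m`
has, for every `n ≥ 1`, a solution commuting with `m`, with `1 + m m⁽ⁿ⁾` a unit,
given in closed form by `m⁽ⁿ⁾ = ((1+m)ⁿ − (1−m)ⁿ)((1+m)ⁿ + (1−m)ⁿ)⁻¹`. -/
theorem msft_star_power_closed_form
    {R : Type*} [Ring R] (m : R) (P Q : ℕ → R)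
    (hP : ∀ k, P k = (1 + m) ^ k + (1 - m) ^ k)
    (hQ : ∀ k, Q k = (1 + m) ^ k - (1 - m) ^ k)
    (hPunit : ∀ k, 1 ≤ k → IsUnit (P k))
    (a : ℕ → R) (ha1 : a 1 = m)
    (harec : ∀ n, 1 ≤ n →
      a (n + 1) = (m + a n * m) * Ring.inverse (1 + a n * m)
        + (a n - m * a n) * Ring.inverse (1 + m * a n)) :
    ∀ n, 1 ≤ n →
      Commute m (a n) ∧ IsUnit (1 + m * a n) ∧ a n = Q n * Ring.inverse (P n) := by
  have c1 : ∀ k : ℕ, Commute m ((1 + m) ^ k) := fun k =>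
    (((Commute.one_right m).add_right (Commute.refl m)).pow_right k)
  have c2 : ∀ k : ℕ, Commute m ((1 - m) ^ k) := fun k =>
    (((Commute.one_right m).sub_right (Commute.refl m)).pow_right k)
  have cP : ∀ k, Commute m (P k) := fun k => by rw [hP]; exact (c1 k).add_right (c2 k)
  have cQ : ∀ k, Commute m (Q k) := fun k => by rw [hQ]; exact (c1 k).sub_right (c2 k)
  have cPinv : ∀ k, 1 ≤ k → Commute m (Ring.inverse (P k)) := fun k hk => by
    have h := cP k
    rw [← (hPunit k hk).unit_spec] at h
    rw [← (hPunit k hk).unit_spec, Ring.inverse_unit]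
    exact h.units_inv_right
  have hPsucc : ∀ n : ℕ, P (n + 1) = P n + m * Q n := fun n => by
    rw [hP, hQ, hP, pow_succ, pow_succ]
    simp only [mul_sub, mul_add, (c1 n).eq, (c2 n).eq]
    noncomm_ring
  have hQsucc : ∀ n : ℕ, Q (n + 1) = m * P n + Q n := fun n => by
    rw [hQ, hP, hQ, pow_succ, pow_succ]
    simp only [mul_sub, mul_add, (c1 n).eq, (c2 n).eq]
    noncomm_ring
  have key1 : ∀ n, 1 ≤ n → a n = Q n * Ring.inverse (P n) →
      1 + m * a n = P (n + 1) * Ring.inverse (P n) := by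
    intro n hn hform
    rw [hform, hPsucc, add_mul, ← mul_assoc, Ring.mul_inverse_cancel _ (hPunit n hn),
      mul_assoc]
  have form : ∀ n, 1 ≤ n → a n = Q n * Ring.inverse (P n) := by
    intro n hn
    induction n, hn using Nat.le_induction with
    | base =>
      rw [ha1, Ring.eq_mul_inverse_iff_mul_eq _ _ _ (hPunit 1 le_rfl), hP, hQ]
      noncomm_ring
    | succ n hn ih =>
      have cm : Commute m (a n) := by rw [ih]; exact (cQ n).mul_right (cPinv n hn)
      have hk1 := key1 n hn ih
      have hXinv : Ring.inverse (1 + m * a n) = P n * Ring.inverse (P (n + 1)) := by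
        have hu := hPunit (n + 1) (by omega)
        have hv := hPunit n hn
        have h2 : 1 + m * a n = ↑(hu.unit * hv.unit⁻¹) := by
          rw [hk1, Units.val_mul, hu.unit_spec, ← Ring.inverse_unit, hv.unit_spec]
        rw [h2, Ring.inverse_unit, mul_inv_rev, inv_inv, Units.val_mul, hv.unit_spec,
          ← Ring.inverse_unit, hu.unit_spec]
      rw [harec n hn, ← cm.eq, ← add_mul]
      have hsum : m + m * a n + (a n - m * a n) = m + a n := by abel
      rw [hsum, hXinv, ← mul_assoc, add_mul, ih,
        Ring.inverse_mul_cancel_right _ _ (hPunit n hn), ← hQsucc]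
  intro n hn
  have cm : Commute m (a n) := by rw [form n hn]; exact (cQ n).mul_right (cPinv n hn)
  refine ⟨cm, ?_, form n hn⟩
  rw [key1 n hn (form n hn)]
  exact (hPunit (n + 1) (by omega)).mul (hPunit n hn).ringInverse
end

section
/- Let R be a commutative unital ring, let m ∈ R, and for k ≥ 0 set P_k = (1+m)^k + (1−m)^k and Q_k = (1+m)^k − (1−m)^k; assume P_k is a unit for every k ≥ 1 and define a_k = Q_k · P_k⁻¹. Then for all n, k ≥ 1 the element 1 + a_n a_k is a unit of R and the Moyal composition rule (a_n + a_k)(1 + a_n a_k)⁻¹ = a_{n+k} holds; i.e. the wedge states satisfy W_n * W_k = W_{n+k} at the level of their defining matrices. -/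
/-- The wedge-state matrices `a_k = ((1+m)^k − (1−m)^k)((1+m)^k + (1−m)^k)⁻¹` satisfy
the Moyal composition rule `(a_n + a_k)(1 + a_n a_k)⁻¹ = a_{n+k}`, i.e.
`W_n * W_k = W_{n+k}` at the level of the Gaussian matrices. -/
theorem msft_wedge_composition
    {R : Type*} [CommRing R] (m : R) (P Q a : ℕ → R)
    (hP : ∀ k, P k = (1 + m) ^ k + (1 - m) ^ k)
    (hQ : ∀ k, Q k = (1 + m) ^ k - (1 - m) ^ k)
    (hPunit : ∀ k, 1 ≤ k → IsUnit (P k))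
    (ha : ∀ k, a k = Q k * Ring.inverse (P k)) :
    ∀ n k, 1 ≤ n → 1 ≤ k →
      IsUnit (1 + a n * a k) ∧
        (a n + a k) * Ring.inverse (1 + a n * a k) = a (n + k) := by
  intro n k hn hk
  have hnk : 1 ≤ n + k := by omega
  have hn' : Ring.inverse (P n) * P n = 1 := Ring.inverse_mul_cancel _ (hPunit n hn)
  have hk' : Ring.inverse (P k) * P k = 1 := Ring.inverse_mul_cancel _ (hPunit k hk)
  have hnk' : Ring.inverse (P (n + k)) * P (n + k) = 1 :=
    Ring.inverse_mul_cancel _ (hPunit (n + k) hnk)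
  have e1 : P n * P k + Q n * Q k = P 1 * P (n + k) := by
    simp only [hP, hQ, pow_add, pow_one]; ring
  have e2 : Q n * P k + P n * Q k = P 1 * Q (n + k) := by
    simp only [hP, hQ, pow_add, pow_one]; ring
  have key : (1 + a n * a k) * (P n * P k) = P 1 * P (n + k) := by
    rw [ha, ha]
    linear_combination (Q n * Ring.inverse (P n) * Q k * P n) * hk' +
      (Q n * Q k) * hn' + e1
  have hx : IsUnit (1 + a n * a k) := by
    apply isUnit_of_mul_isUnit_left (y := P n * P k)
    rw [key]
    exact (hPunit 1 le_rfl).mul (hPunit (n + k) hnk)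
  refine ⟨hx, ?_⟩
  have hx' : Ring.inverse (1 + a n * a k) * (1 + a n * a k) = 1 :=
    Ring.inverse_mul_cancel _ hx
  have hu : IsUnit ((1 + a n * a k) * (P (n + k) * (P n * P k))) :=
    hx.mul (((hPunit (n + k) hnk).mul ((hPunit n hn).mul (hPunit k hk))))
  apply hu.mul_right_cancel
  set x := Ring.inverse (P n)
  set y := Ring.inverse (P k)
  set w := Ring.inverse (P (n + k))
  set z := Ring.inverse (1 + a n * a k)
  simp only [ha n, ha k, ha (n + k)] at hx' key ⊢
  linear_combination
    ((Q n * x + Q k * y) * P (n + k) * P n * P k) * hx' +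
    (Q n * P k * P (n + k)) * hn' + (Q k * P n * P (n + k)) * hk' +
    P (n + k) * e2 -
    (Q (n + k) * w * P (n + k)) * key -
    (Q (n + k) * P 1 * P (n + k)) * hnk'
end

section
/- Let R be a commutative unital ring, m ∈ R a unit, and for k ≥ 0 set P_k = (1+m)^k + (1−m)^k and Q_k = (1+m)^k − (1−m)^k; assume P_k is a unit for every k ≥ 1, and set a_k = Q_k · P_k⁻¹. Let M be an R-module, λ ∈ M, and define the sequence λ⁽¹⁾ = λ and λ⁽ⁿ⁺¹⁾ = (1 + m a_n)⁻¹ • ( (λ + λ⁽ⁿ⁾) + a_n • λ − m • λ⁽ⁿ⁾ ). Then for every n ≥ 1, λ⁽ⁿ⁾ = (m⁻¹ a_n) • λ. -/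
/-- The shift-vector recursion of the MSFT star powers,
`λ⁽ⁿ⁺¹⁾ = (1 + m a_n)⁻¹ • ((λ + λ⁽ⁿ⁾) + a_n • λ − m • λ⁽ⁿ⁾)` with `λ⁽¹⁾ = λ`,
has the closed-form solution `λ⁽ⁿ⁾ = (m⁻¹ a_n) • λ` for all `n ≥ 1`. -/
theorem msft_shift_vector_closed_form
    {R : Type*} [CommRing R] (m : R) (hm : IsUnit m) (P Q a : ℕ → R)
    (hP : ∀ k, P k = (1 + m) ^ k + (1 - m) ^ k)
    (hQ : ∀ k, Q k = (1 + m) ^ k - (1 - m) ^ k)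
    (hPunit : ∀ k, 1 ≤ k → IsUnit (P k))
    (ha : ∀ k, a k = Q k * Ring.inverse (P k))
    {M : Type*} [AddCommGroup M] [Module R M] (lam : M)
    (l : ℕ → M) (hl1 : l 1 = lam)
    (hlrec : ∀ n, 1 ≤ n →
      l (n + 1) = Ring.inverse (1 + m * a n) • ((lam + l n) + a n • lam - m • l n)) :
    ∀ n, 1 ≤ n → l n = (Ring.inverse m * a n) • lam := by
  have hmm : m * Ring.inverse m = 1 := Ring.mul_inverse_cancel _ hm
  intro n hn
  induction n, hn using Nat.le_induction with
  | base =>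
    have hP1 : P 1 * Ring.inverse (P 1) = 1 := Ring.mul_inverse_cancel _ (hPunit 1 le_rfl)
    have h1 : Ring.inverse m * a 1 = 1 := by
      have hQP : Q 1 = m * P 1 := by rw [hQ, hP]; ring
      rw [ha, hQP]
      linear_combination hP1 + (P 1 * Ring.inverse (P 1)) * hmm
    rw [hl1, h1, one_smul]
  | succ n hn IH =>
    have hPn : P n * Ring.inverse (P n) = 1 := Ring.mul_inverse_cancel _ (hPunit n hn)
    have hPn1 : P (n + 1) * Ring.inverse (P (n + 1)) = 1 :=
      Ring.mul_inverse_cancel _ (hPunit (n + 1) (by omega))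
    have hPQ1 : P n + m * Q n = P (n + 1) := by rw [hP, hQ, hP]; ring
    have hPQ2 : m * P n + Q n = Q (n + 1) := by rw [hP, hQ, hQ]; ring
    have h1 : 1 + m * a n = P (n + 1) * Ring.inverse (P n) := by
      rw [ha, ← hPQ1]; linear_combination -hPn
    have hunit : IsUnit (1 + m * a n) := by
      rw [h1]; exact (hPunit (n + 1) (by omega)).mul (IsUnit.ringInverse (hPunit n hn))
    have hkey : (1 + m * a n) * a (n + 1) = m + a n := by
      rw [h1, ha (n + 1), ha n, ← hPQ2]
      linear_combination ((m * P n + Q n) * Ring.inverse (P n)) * hPn1 + m * hPn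
    have hinv : Ring.inverse (1 + m * a n) * (1 + m * a n) = 1 :=
      Ring.inverse_mul_cancel _ hunit
    have hcoef : Ring.inverse (1 + m * a n) * (1 + Ring.inverse m * a n)
        = Ring.inverse m * a (n + 1) := by
      refine (hunit.mul hm).mul_left_cancel ?_
      linear_combination (m * (1 + Ring.inverse m * a n)) * hinv
        + (a n - (1 + m * a n) * a (n + 1)) * hmm - hkey
    rw [hlrec n hn, IH]
    have hbr : (lam + (Ring.inverse m * a n) • lam) + a n • lam
        - m • ((Ring.inverse m * a n) • lam) = (1 + Ring.inverse m * a n) • lam := by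
      have h' : m * (Ring.inverse m * a n) = a n := by linear_combination a n * hmm
      rw [smul_smul, h', add_smul, one_smul]; abel
    rw [hbr, smul_smul, hcoef]
end

section
/- Let R be a commutative unital ring, m ∈ R, and for k ≥ 0 set P_k = (1+m)^k + (1−m)^k and Q_k = (1+m)^k − (1−m)^k; assume P_k is a unit for every k ≥ 1 (in particular 2 = P_1 is a unit), and set a_k = Q_k · P_k⁻¹. Then for every n ≥ 1 the telescoping identity ∏_{k=1}^{n−1} (1 + m a_k) = 2⁻¹ · P_n = 2⁻¹ · ((1+m)^n + (1−m)^n) holds (the empty product for n = 1 being 1). -/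
/-- The telescoping identity `∏_{k=1}^{n−1} (1 + m a_k) = ((1+m)ⁿ + (1−m)ⁿ)/2`
for the wedge-state matrices `a_k = ((1+m)^k − (1−m)^k)((1+m)^k + (1−m)^k)⁻¹`,
giving the determinant factor in the normalization of the `n`-th wedge state. -/
theorem msft_wedge_normalization_product
    {R : Type*} [CommRing R] (m : R) (P Q a : ℕ → R)
    (hP : ∀ k, P k = (1 + m) ^ k + (1 - m) ^ k)
    (hQ : ∀ k, Q k = (1 + m) ^ k - (1 - m) ^ k)
    (hPunit : ∀ k, 1 ≤ k → IsUnit (P k))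
    (ha : ∀ k, a k = Q k * Ring.inverse (P k)) :
    ∀ n, 1 ≤ n →
      ∏ k ∈ Finset.Ico 1 n, (1 + m * a k) = Ring.inverse (2 : R) * P n := by
  have hP1 : P 1 = 2 := by rw [hP]; ring
  have h2 : IsUnit (2 : R) := hP1 ▸ hPunit 1 le_rfl
  intro n hn
  induction n with
  | zero => omega
  | succ n ih =>
    rcases Nat.eq_or_lt_of_le hn with h | h
    · -- n + 1 = 1
      have : n = 0 := by omega
      subst this
      simp only [Finset.Ico_self, Finset.prod_empty, hP1]
      exact (Ring.inverse_mul_cancel 2 h2).symm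
    · have hn1 : 1 ≤ n := by omega
      rw [Finset.prod_Ico_succ_top hn1, ih hn1]
      have hstep : P (n + 1) = P n + m * Q n := by
        rw [hP, hP, hQ]; ring
      have hu := hPunit n hn1
      have hinv : P n * Ring.inverse (P n) = 1 := Ring.mul_inverse_cancel _ hu
      have : (1 + m * a n) = P (n + 1) * Ring.inverse (P n) := by
        rw [ha, hstep]
        rw [add_mul, hinv]; ring
      rw [this,
        show Ring.inverse (2:R) * P n * (P (n+1) * Ring.inverse (P n))
          = P (n+1) * Ring.inverse 2 * (P n * Ring.inverse (P n)) from by ring,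
        hinv, mul_one, mul_comm]
end
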